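/- arXiv:2011.01648 — 2 statements merged into one kernel-verified Lean document; each statement's English description precedes it below -/
import Mathlib

section
/- Let ℐ be a finite set and let {P^{a,n}}_{(a,n)∈ℐ×ℤ} and {Q^{a,n}}_{(a,n)∈ℐ×ℤ} be two collections of polynomials in the variables {X^{b,m} : (b,m)∈ℐ×ℤ}, each having widening gap. Then for each (a,n), the sum Σ_{(b,m)∈ℐ×ℤ} P^{b,m} · (∂ Q^{a,n} / ∂ X^{b,m}) has only finitely many nonzero summands, and the resulting collection of polynomials indexed by (a,n) ∈ ℐ×ℤ again has widening gap. -/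
open MvPolynomial

lemma pderiv_mem_supported {σ : Type*} {s : Set σ} (i : σ)
    {f : MvPolynomial σ ℂ} (hf : f ∈ supported ℂ s) :
    pderiv i f ∈ supported ℂ s := by
  classical
  rw [supported_eq_adjoin_X] at hf
  have : f ∈ supported ℂ s ∧ pderiv i f ∈ supported ℂ s := by
    induction hf using Algebra.adjoin_induction with
    | mem x hx =>
      obtain ⟨j, hj, rfl⟩ := hx
      refine ⟨X_mem_supported.2 hj, ?_⟩
      by_cases h : j = i
      · subst h; simp only [pderiv_X_self]; exact one_mem _
      · simp only [pderiv_X_of_ne h]; exact zero_mem _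
    | algebraMap r =>
      exact ⟨algebraMap_mem _ r, by simp only [algebraMap_eq, pderiv_C]; exact zero_mem _⟩
    | add x y hx hy ihx ihy =>
      exact ⟨add_mem ihx.1 ihy.1, by rw [map_add]; exact add_mem ihx.2 ihy.2⟩
    | mul x y hx hy ihx ihy =>
      exact ⟨mul_mem ihx.1 ihy.1, by
        rw [pderiv_mul]; exact add_mem (mul_mem ihx.2 ihy.1) (mul_mem ihx.1 ihy.2)⟩
  exact this.2

/-- A collection of polynomials `{P^{a,n}}` in `ℂ[X^{b,m}]_{(b,m)∈ℐ×ℤ}` has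
'widening gap' if for every `K ≥ 1`, for all but finitely many `n ∈ ℤ`, each
`P^{a,n}` lies in the subring generated by the variables `X^{b,m}` with
`|m| < |n| - K`. -/
def WideningGap {ι : Type*} (P : ι × ℤ → MvPolynomial (ι × ℤ) ℂ) : Prop :=
  ∀ K : ℤ, 1 ≤ K →
    {n : ℤ | ¬ ∀ a : ι,
      P (a, n) ∈ MvPolynomial.supported ℂ {bm : ι × ℤ | |bm.2| < |n| - K}}.Finite

/-- If `{P^{a,n}}` and `{Q^{a,n}}` have widening gap then for each `(a,n)` the sum
`Σ_{(b,m)} P^{b,m} · ∂Q^{a,n}/∂X^{b,m}` has only finitely many nonzero summands,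
and the resulting collection again has widening gap. -/
theorem stmt2 {ι : Type*} [Fintype ι]
    (P Q : ι × ℤ → MvPolynomial (ι × ℤ) ℂ)
    (hP : WideningGap P) (hQ : WideningGap Q) :
    (∀ an : ι × ℤ,
      {bm : ι × ℤ | P bm * MvPolynomial.pderiv bm (Q an) ≠ 0}.Finite) ∧
    WideningGap (fun an => ∑ᶠ bm : ι × ℤ, P bm * MvPolynomial.pderiv bm (Q an)) := by
  classical
  have hfin : ∀ an : ι × ℤ, {bm : ι × ℤ | P bm * pderiv bm (Q an) ≠ 0}.Finite := by
    intro an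
    apply (Q an).vars.finite_toSet.subset
    intro bm h
    by_contra hv
    exact h (by rw [pderiv_eq_zero_of_notMem_vars hv, mul_zero])
  refine ⟨hfin, ?_⟩
  intro K hK
  set MP := (hP K hK).toFinset with hMP
  set C : ℕ := MP.sup (fun m =>
    Finset.univ.sup (fun b : ι => (P (b, m)).vars.sup (fun v => v.2.natAbs))) with hC
  apply Set.Finite.subset ((hQ K hK).union (Set.finite_Icc (-(C + K : ℤ)) (C + K)))
  intro n hn
  simp only [Set.mem_setOf_eq] at hn
  rw [Set.mem_union]
  by_contra hcon
  push_neg at hcon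
  obtain ⟨h1, h2⟩ := hcon
  simp only [Set.mem_setOf_eq, not_not] at h1
  have hQn : ∀ a : ι, Q (a, n) ∈ supported ℂ {bm : ι × ℤ | |bm.2| < |n| - K} := by
    push_neg at h1; exact h1
  have hnbig : (C : ℤ) + K < |n| :=
    lt_of_not_ge (fun h => h2 (Set.mem_Icc.2 (abs_le.1 h)))
  apply hn
  intro a
  rw [finsum_eq_sum _ (hfin (a, n))]
  refine Subalgebra.sum_mem _ ?_
  intro bm hbm
  replace hbm : P bm * pderiv bm (Q (a, n)) ≠ 0 := by simpa using hbm
  have hpd : pderiv bm (Q (a, n)) ≠ 0 := fun h => hbm (by rw [h, mul_zero])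
  have hvar : bm ∈ (Q (a, n)).vars := by
    by_contra hv
    exact hpd (pderiv_eq_zero_of_notMem_vars hv)
  have hbm2 : |bm.2| < |n| - K := (mem_supported.1 (hQn a)) hvar
  refine mul_mem ?_ (pderiv_mem_supported bm (hQn a))
  by_cases hbad : bm.2 ∈ MP
  · rw [mem_supported]
    intro v hv
    have hle : v.2.natAbs ≤ C := by
      calc v.2.natAbs ≤ (P (bm.1, bm.2)).vars.sup (fun v => v.2.natAbs) :=
            Finset.le_sup (f := fun v : ι × ℤ => v.2.natAbs) (show v ∈ (P (bm.1, bm.2)).vars from hv)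
        _ ≤ Finset.univ.sup (fun b : ι => (P (b, bm.2)).vars.sup (fun v => v.2.natAbs)) :=
            Finset.le_sup (f := fun b : ι => (P (b, bm.2)).vars.sup fun v => v.2.natAbs) (Finset.mem_univ bm.1)
        _ ≤ C := by rw [hC]; exact Finset.le_sup (f := fun m : ℤ => Finset.univ.sup fun b : ι => (P (b, m)).vars.sup fun v => v.2.natAbs) hbad
    show |v.2| < |n| - K
    have : |v.2| = (v.2.natAbs : ℤ) := Int.abs_eq_natAbs v.2
    rw [this]
    have : (v.2.natAbs : ℤ) ≤ (C : ℤ) := by exact_mod_cast hle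
    omega
  · rw [hMP, Set.Finite.mem_toFinset, Set.mem_setOf_eq, not_not] at hbad
    have := hbad bm.1
    refine supported_mono ?_ this
    intro v hv
    simp only [Set.mem_setOf_eq] at hv ⊢
    have : |bm.2| ≤ |n| := by omega
    omega
end

section
/- Let (C•, d_C) and (D•, d_D) be cochain complexes of ℂ-vector spaces in non-negative degrees, let T_C: C• → C• and T_D: D• → D• be degree-0 linear maps commuting with the differentials and injective in all degrees ≥ 1, and let μ: C• → D• be a morphism of complexes that is a quasi-isomorphism and satisfies μ ∘ T_C = T_D ∘ μ. Let r ≥ 1 and let X ∈ C^r satisfy: (i) dX ∈ T_C(C^{r+1}), and (ii) μ(X) ∈ T_D(D^r). Then there exist B ∈ C^r and C' ∈ C^{r−1} such that X = T_C(B) + d(C'). -/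
open CategoryTheory

/-- `(f ≫ g) x = g (f x)` for `ModuleCat` morphisms. -/
lemma ModuleCat.comp_apply13 {R : Type*} [Ring R] {M N U : ModuleCat R} (f : M ⟶ N) (g : N ⟶ U)
    (x : M) : (f ≫ g) x = g (f x) := rfl

namespace ShortComplex13

lemma cyc_surj (S : ShortComplex (ModuleCat ℂ)) (x : S.X₂) (hx : S.g x = 0) :
    ∃ c : S.cycles, S.iCycles c = x := by
  refine ⟨S.moduleCatCyclesIso.inv (⟨x, LinearMap.mem_ker.2 hx⟩ : S.moduleCatLeftHomologyData.K), ?_⟩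
  exact (S.moduleCatCyclesIso_inv_iCycles_apply _).trans rfl

lemma pi_zero_iff (S : ShortComplex (ModuleCat ℂ)) (c : S.cycles) :
    S.homologyπ c = 0 ↔ ∃ a : S.X₁, S.toCycles a = c := by
  have hinj : Function.Injective S.moduleCatCyclesIso.hom :=
    (ModuleCat.mono_iff_injective _).1 inferInstance
  constructor
  · intro h
    have h2 : S.moduleCatLeftHomologyData.π (S.moduleCatCyclesIso.hom c) = 0 := by
      rw [← S.π_moduleCatCyclesIso_hom_apply, h, map_zero]
    have h3 : S.moduleCatCyclesIso.hom c ∈ LinearMap.range S.moduleCatToCycles :=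
      (Submodule.Quotient.mk_eq_zero _).1 h2
    obtain ⟨a, ha⟩ := h3
    refine ⟨a, hinj ?_⟩
    rw [← ModuleCat.comp_apply13, S.toCycles_moduleCatCyclesIso_hom]
    exact ha
  · rintro ⟨a, rfl⟩
    rw [← ModuleCat.comp_apply13, S.toCycles_comp_homologyπ]
    rfl
lemma mono_chase {S T : ShortComplex (ModuleCat ℂ)} (φ : S ⟶ T)
    (hm : Function.Injective (ShortComplex.homologyMap φ))
    (x : S.X₂) (hx : S.g x = 0) (w : T.X₁) (hw : φ.τ₂ x = T.f w) :
    ∃ a : S.X₁, x = S.f a := by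
  obtain ⟨c, hc⟩ := cyc_surj S x hx
  have hiT : Function.Injective T.iCycles := (ModuleCat.mono_iff_injective _).1 inferInstance
  have key : ShortComplex.cyclesMap φ c = T.toCycles w := by
    apply hiT
    rw [← ModuleCat.comp_apply13, ShortComplex.cyclesMap_i, ← ModuleCat.comp_apply13,
      T.toCycles_i, ModuleCat.comp_apply13, hc, hw]
  have hπ0 : S.homologyπ c = 0 := by
    apply hm
    rw [map_zero, ← ModuleCat.comp_apply13, ShortComplex.homologyπ_naturality,
      ModuleCat.comp_apply13, key]
    exact (pi_zero_iff T _).2 ⟨w, rfl⟩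
  obtain ⟨a, ha⟩ := (pi_zero_iff S c).1 hπ0
  refine ⟨a, ?_⟩
  rw [← hc, ← ha, ← ModuleCat.comp_apply13, S.toCycles_i]

lemma epi_chase {S T : ShortComplex (ModuleCat ℂ)} (φ : S ⟶ T)
    (he : Function.Surjective (ShortComplex.homologyMap φ))
    (y : T.X₂) (hy : T.g y = 0) :
    ∃ x : S.X₂, S.g x = 0 ∧ ∃ w : T.X₁, y = φ.τ₂ x + T.f w := by
  obtain ⟨cy, hcy⟩ := cyc_surj T y hy
  obtain ⟨h, hh⟩ := he (T.homologyπ cy)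
  have hsπ : Function.Surjective S.homologyπ :=
    (ModuleCat.epi_iff_surjective _).1 inferInstance
  obtain ⟨c, rfl⟩ := hsπ h
  refine ⟨S.iCycles c, ?_, ?_⟩
  · have := S.iCycles_g
    calc S.g (S.iCycles c) = (S.iCycles ≫ S.g) c := rfl
      _ = 0 := by rw [this]; rfl
  · have hπ0 : T.homologyπ (cy - ShortComplex.cyclesMap φ c) = 0 := by
      rw [map_sub, ← ModuleCat.comp_apply13, ← ShortComplex.homologyπ_naturality,
        ModuleCat.comp_apply13, hh, sub_self]
    obtain ⟨w, hw⟩ := (pi_zero_iff T _).1 hπ0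
    refine ⟨w, ?_⟩
    have := congrArg T.iCycles hw
    rw [map_sub, ← ModuleCat.comp_apply13 T.toCycles, T.toCycles_i, hcy,
      ← ModuleCat.comp_apply13, ShortComplex.cyclesMap_i, ModuleCat.comp_apply13] at this
    rw [this]; abel

end ShortComplex13

open ShortComplex13 HomologicalComplex

/-- Diagram-chase lemma: let `C•`, `D•` be cochain complexes of ℂ-vector spaces
in non-negative degrees, `T_C`, `T_D` degree-0 chain maps that are injective in
all degrees `≥ 1`, and `μ : C• ⟶ D•` a quasi-isomorphism with
`μ ∘ T_C = T_D ∘ μ`.  If `r ≥ 1` and `X ∈ C^r` satisfies `dX ∈ im T_C` and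
`μ(X) ∈ im T_D`, then `X = T_C(B) + d(C')` for some `B ∈ C^r`, `C' ∈ C^{r-1}`. -/

theorem stmt13 (C D : CochainComplex (ModuleCat ℂ) ℕ)
    (TC : C ⟶ C) (TD : D ⟶ D)
    (hTC : ∀ r : ℕ, 1 ≤ r → Function.Injective (TC.f r))
    (hTD : ∀ r : ℕ, 1 ≤ r → Function.Injective (TD.f r))
    (μ : C ⟶ D) (hq : QuasiIso μ)
    (hcomm : TC ≫ μ = μ ≫ TD)
    (r : ℕ) (hr : 1 ≤ r) (X : C.X r)
    (h1 : ∃ Y : C.X (r + 1), (C.d r (r + 1)) X = (TC.f (r + 1)) Y)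
    (h2 : ∃ h : D.X r, (μ.f r) X = (TD.f r) h) :
    ∃ (B : C.X r) (C' : C.X (r - 1)),
      X = (TC.f r) B + (C.d (r - 1) r) C' := by
  obtain ⟨n, rfl⟩ : ∃ n, r = n + 1 := ⟨r - 1, (Nat.succ_pred_eq_of_pos hr).symm⟩
  obtain ⟨Y, hY⟩ := h1
  obtain ⟨h, hh⟩ := h2
  replace hY : C.d (n+1) (n+2) X = TC.f (n+2) Y := hY
  -- the short complex maps induced by μ at degrees r and r+1
  set φr := (shortComplexFunctor' (ModuleCat ℂ) (ComplexShape.up ℕ) n (n+1) (n+2)).map μ with hφr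
  set φr1 := (shortComplexFunctor' (ModuleCat ℂ) (ComplexShape.up ℕ) (n+1) (n+2) (n+3)).map μ
    with hφr1
  have hq1 : ShortComplex.QuasiIso φr := by
    rw [← quasiIsoAt_iff' μ n (n+1) (n+2) (CochainComplex.prev_nat_succ n)
      (CochainComplex.next ℕ (n+1))]
    infer_instance
  have hq2 : ShortComplex.QuasiIso φr1 := by
    rw [← quasiIsoAt_iff' μ (n+1) (n+2) (n+3) (CochainComplex.prev_nat_succ (n+1))
      (CochainComplex.next ℕ (n+2))]
    infer_instance
  have hiso1 : IsIso (ShortComplex.homologyMap φr) := (ShortComplex.quasiIso_iff φr).1 hq1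
  have hiso2 : IsIso (ShortComplex.homologyMap φr1) := (ShortComplex.quasiIso_iff φr1).1 hq2
  have hinj1 : Function.Injective (ShortComplex.homologyMap φr) :=
    (ModuleCat.mono_iff_injective _).1 inferInstance
  have hsurj1 : Function.Surjective (ShortComplex.homologyMap φr) :=
    (ModuleCat.epi_iff_surjective _).1 inferInstance
  have hinj2 : Function.Injective (ShortComplex.homologyMap φr1) :=
    (ModuleCat.mono_iff_injective _).1 inferInstance
  -- element-level commutation lemmas
  have dTC : ∀ (i j : ℕ) (x : C.X i), C.d i j (TC.f i x) = TC.f j (C.d i j x) := by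
    intro i j x
    have h0 := TC.comm i j
    calc C.d i j (TC.f i x) = (TC.f i ≫ C.d i j) x := rfl
      _ = (C.d i j ≫ TC.f j) x := by rw [h0]
      _ = TC.f j (C.d i j x) := rfl
  have dTD : ∀ (i j : ℕ) (x : D.X i), D.d i j (TD.f i x) = TD.f j (D.d i j x) := by
    intro i j x
    have h0 := TD.comm i j
    calc D.d i j (TD.f i x) = (TD.f i ≫ D.d i j) x := rfl
      _ = (D.d i j ≫ TD.f j) x := by rw [h0]
      _ = TD.f j (D.d i j x) := rfl
  have dμ : ∀ (i j : ℕ) (x : C.X i), D.d i j (μ.f i x) = μ.f j (C.d i j x) := by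
    intro i j x
    have h0 := μ.comm i j
    calc D.d i j (μ.f i x) = (μ.f i ≫ D.d i j) x := rfl
      _ = (C.d i j ≫ μ.f j) x := by rw [h0]
      _ = μ.f j (C.d i j x) := rfl
  have μTC : ∀ (i : ℕ) (x : C.X i), μ.f i (TC.f i x) = TD.f i (μ.f i x) := by
    intro i x
    have h0 : (TC ≫ μ).f i = (μ ≫ TD).f i := by rw [hcomm]
    rw [HomologicalComplex.comp_f, HomologicalComplex.comp_f] at h0
    calc μ.f i (TC.f i x) = (TC.f i ≫ μ.f i) x := rfl
      _ = (μ.f i ≫ TD.f i) x := by rw [h0]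
      _ = TD.f i (μ.f i x) := rfl
  have ddX : ∀ (i j k : ℕ) (x : C.X i), C.d j k (C.d i j x) = 0 := by
    intro i j k x
    calc C.d j k (C.d i j x) = (C.d i j ≫ C.d j k) x := rfl
      _ = 0 := by rw [C.d_comp_d]; rfl
  -- Step 1: dY = 0
  have hdY : C.d (n+2) (n+3) Y = 0 := by
    apply hTC (n+3) (by omega)
    rw [← dTC, ← hY, ddX (n+1) (n+2) (n+3), map_zero]
  -- Step 2: μ Y = d h
  have hμY : μ.f (n+2) Y = D.d (n+1) (n+2) h := by
    apply hTD (n+2) (by omega)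
    rw [← μTC, ← hY, ← dμ, hh, dTD]
  -- Step 3: Y = d B₀
  obtain ⟨B₀, hB₀⟩ : ∃ a : C.X (n+1), Y = C.d (n+1) (n+2) a :=
    mono_chase φr1 hinj2 Y hdY h hμY
  -- Step 4: h' := h - μ B₀ is a cocycle
  have hdh' : D.d (n+1) (n+2) (h - μ.f (n+1) B₀) = 0 := by
    rw [map_sub, dμ, ← hB₀, ← hμY, sub_self]
  -- Step 5: lift h' to a cocycle B' in C
  obtain ⟨B', hdB', w, hw⟩ : ∃ x : C.X (n+1), C.d (n+1) (n+2) x = 0 ∧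
      ∃ w : D.X n, h - μ.f (n+1) B₀ = μ.f (n+1) x + D.d n (n+1) w :=
    epi_chase φr hsurj1 (h - μ.f (n+1) B₀) hdh'
  -- Step 6: Z = X - TC B₀ - TC B' is a cocycle with μ Z exact
  have hdZ : C.d (n+1) (n+2) (X - TC.f (n+1) B₀ - TC.f (n+1) B') = 0 := by
    rw [map_sub, map_sub, hY, dTC, ← hB₀, dTC, hdB', map_zero, sub_zero, sub_self]
  have hμZ : μ.f (n+1) (X - TC.f (n+1) B₀ - TC.f (n+1) B')
      = D.d n (n+1) (TD.f n w) := by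
    rw [map_sub, map_sub, hh, μTC, μTC, dTD, ← map_sub, ← map_sub]
    congr 1
    rw [hw]
    abel
  obtain ⟨C', hC'⟩ : ∃ a : C.X n, X - TC.f (n+1) B₀ - TC.f (n+1) B' = C.d n (n+1) a :=
    mono_chase φr hinj1 _ hdZ (TD.f n w) hμZ
  refine ⟨B₀ + B', C', ?_⟩
  show X = TC.f (n+1) (B₀ + B') + C.d n (n+1) C'
  rw [map_add, ← hC']
  abel
end
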